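/- Let f : ℂ → ℂ be analytic at z₀ with f(z₀) = 0 and f'(z₀) ≠ 0, and define Halley's method H_f(w) = w + 2·f(w)·f'(w)/(f(w)·f''(w) − 2·f'(w)²). Then H_f is analytic on a neighborhood of z₀ and z₀ is a second-order superattracting fixed point: H_f(z₀) = z₀, (H_f)'(z₀) = 0, and (H_f)''(z₀) = 0. -/

import Mathlib

private theorem analyticAt_deriv' {f : ℂ → ℂ} {z₀ : ℂ} (hf : AnalyticAt ℂ f z₀) :
    AnalyticAt ℂ (deriv f) z₀ := by
  have : AnalyticOnNhd ℂ f {w | AnalyticAt ℂ f w} := fun z hz => hz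
  exact this.deriv z₀ hf


/-- At a simple zero `z₀` of `f`, Halley's method `H_f` is analytic and `z₀` is a
second-order superattracting fixed point: `H_f(z₀) = z₀`, `H_f'(z₀) = 0`,
`H_f''(z₀) = 0` (cubic convergence of Halley's method). -/
theorem halley_superattracting
    (f H : ℂ → ℂ) (z₀ : ℂ)
    (hf : AnalyticAt ℂ f z₀) (hfz : f z₀ = 0) (hf' : deriv f z₀ ≠ 0)
    (hH : H = fun w => w + 2 * f w * deriv f w
        / (f w * deriv (deriv f) w - 2 * (deriv f w) ^ 2)) :
    AnalyticAt ℂ H z₀ ∧ H z₀ = z₀ ∧ deriv H z₀ = 0 ∧ deriv (deriv H) z₀ = 0 := by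
  subst hH
  have ha : AnalyticAt ℂ (deriv f) z₀ := analyticAt_deriv' hf
  set a := deriv f with ha_def
  have hb : AnalyticAt ℂ (deriv a) z₀ := analyticAt_deriv' ha
  set b := deriv a with hb_def
  have hc : AnalyticAt ℂ (deriv b) z₀ := analyticAt_deriv' hb
  set c := deriv b with hc_def
  have hDz : f z₀ * b z₀ - 2 * a z₀ ^ 2 ≠ 0 := by
    rw [hfz]
    simp [pow_eq_zero_iff, hf']
  have hD : AnalyticAt ℂ (fun w => f w * b w - 2 * a w ^ 2) z₀ :=
    (hf.mul hb).sub (analyticAt_const.mul (ha.pow 2))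
  have hHa : AnalyticAt ℂ
      (fun w => w + 2 * f w * a w / (f w * b w - 2 * a w ^ 2)) z₀ :=
    analyticAt_id.add (((analyticAt_const.mul hf).mul ha).div hD hDz)
  -- key derivative formula
  have key : ∀ w, AnalyticAt ℂ f w → (f w * b w - 2 * a w ^ 2) ≠ 0 →
      HasDerivAt (fun w => w + 2 * f w * a w / (f w * b w - 2 * a w ^ 2))
        (1 + ((2 * a w ^ 2 + 2 * f w * b w) * (f w * b w - 2 * a w ^ 2)
            - 2 * f w * a w * (f w * c w - 3 * (a w * b w)))
            / (f w * b w - 2 * a w ^ 2) ^ 2) w := by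
    intro w hw hDw
    have hfw : HasDerivAt f (a w) w := hw.differentiableAt.hasDerivAt
    have haw : HasDerivAt a (b w) w := (analyticAt_deriv' hw).differentiableAt.hasDerivAt
    have hbw : HasDerivAt b (c w) w :=
      (analyticAt_deriv' (analyticAt_deriv' hw)).differentiableAt.hasDerivAt
    have h1 : HasDerivAt (fun w => 2 * f w * a w)
        (2 * a w * a w + 2 * f w * b w) w := (hfw.const_mul 2).mul haw
    have h2 : HasDerivAt (fun w => f w * b w - 2 * a w ^ 2)
        (a w * b w + f w * c w - 2 * ((2 : ℕ) * a w ^ 1 * b w)) w :=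
      (hfw.mul hbw).sub ((haw.pow 2).const_mul 2)
    have h3 := (hasDerivAt_id w).add (h1.div h2 hDw)
    simp only [Pi.add_def, Pi.div_apply, id_eq] at h3
    refine h3.congr_deriv ?_
    field_simp
    ring
  have hevf : ∀ᶠ w in nhds z₀, AnalyticAt ℂ f w := hf.eventually_analyticAt
  have hevD : ∀ᶠ w in nhds z₀, f w * b w - 2 * a w ^ 2 ≠ 0 :=
    hD.continuousAt.eventually_ne hDz
  refine ⟨hHa, by simp [hfz], ?_, ?_⟩
  · rw [(key z₀ hf hDz).deriv, hfz]
    field_simp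
    ring
  · have hev2 : deriv (fun w => w + 2 * f w * a w / (f w * b w - 2 * a w ^ 2))
        =ᶠ[nhds z₀] fun w => 1 + ((2 * a w ^ 2 + 2 * f w * b w) * (f w * b w - 2 * a w ^ 2)
            - 2 * f w * a w * (f w * c w - 3 * (a w * b w)))
            / (f w * b w - 2 * a w ^ 2) ^ 2 :=
      (hevf.and hevD).mono fun w ⟨h1, h2⟩ => (key w h1 h2).deriv
    rw [hev2.deriv_eq]
    -- now compute the second derivative via HasDerivAt at z₀
    have hf0 : HasDerivAt f (a z₀) z₀ := hf.differentiableAt.hasDerivAt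
    have ha0 : HasDerivAt a (b z₀) z₀ := ha.differentiableAt.hasDerivAt
    have hb0 : HasDerivAt b (c z₀) z₀ := hb.differentiableAt.hasDerivAt
    have hc0 : HasDerivAt c (deriv c z₀) z₀ := hc.differentiableAt.hasDerivAt
    have hD0 : HasDerivAt (fun w => f w * b w - 2 * a w ^ 2)
        (a z₀ * b z₀ + f z₀ * c z₀ - 2 * ((2 : ℕ) * a z₀ ^ 1 * b z₀)) z₀ :=
      (hf0.mul hb0).sub ((ha0.pow 2).const_mul 2)
    have hu : HasDerivAt (fun w => (2 * a w ^ 2 + 2 * f w * b w) * (f w * b w - 2 * a w ^ 2)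
            - 2 * f w * a w * (f w * c w - 3 * (a w * b w)))
        (((2 * ((2:ℕ) * a z₀ ^ 1 * b z₀) + (2 * a z₀ * b z₀ + 2 * f z₀ * c z₀))
            * (f z₀ * b z₀ - 2 * a z₀ ^ 2)
          + (2 * a z₀ ^ 2 + 2 * f z₀ * b z₀)
            * (a z₀ * b z₀ + f z₀ * c z₀ - 2 * ((2:ℕ) * a z₀ ^ 1 * b z₀)))
         - ((2 * a z₀ * a z₀ + 2 * f z₀ * b z₀) * (f z₀ * c z₀ - 3 * (a z₀ * b z₀))
          + 2 * f z₀ * a z₀ * ((a z₀ * c z₀ + f z₀ * deriv c z₀)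
              - 3 * (b z₀ * b z₀ + a z₀ * c z₀)))) z₀ := by
      exact ((((ha0.pow 2).const_mul 2).add ((hf0.const_mul 2).mul hb0)).mul hD0).sub
        (((hf0.const_mul 2).mul ha0).mul ((hf0.mul hc0).sub ((ha0.mul hb0).const_mul 3)))
    have hv : HasDerivAt (fun w => (f w * b w - 2 * a w ^ 2) ^ 2)
        ((2:ℕ) * (f z₀ * b z₀ - 2 * a z₀ ^ 2) ^ 1
          * (a z₀ * b z₀ + f z₀ * c z₀ - 2 * ((2:ℕ) * a z₀ ^ 1 * b z₀))) z₀ := hD0.pow 2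
    have hvz : (f z₀ * b z₀ - 2 * a z₀ ^ 2) ^ 2 ≠ 0 := pow_ne_zero _ hDz
    have hG := ((hu.div hv hvz).const_add 1)
    simp only [Pi.div_apply] at hG
    rw [hG.deriv, hfz]
    field_simp
    ring
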